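/- Define r(l₁,l₂,n₁,n₂) := (π²/2)·[(l₁−n₁)² + (l₂−n₂)² + 4i(l₁n₂ − l₂n₁)] for integers l₁,l₂,n₁,n₂, and a(l₁,l₂,n₁,n₂) := −conj(r)/r whenever r ≠ 0. Then there exist integer tuples (l₁,l₂,n₁,n₂) and (l₁',l₂',n₁',n₂') with all relevant r's nonzero such that a(l₁,l₂,n₁,n₂)·a(l₁',l₂',n₁',n₂') ≠ a(l₁,l₂,n₁',n₂')·a(l₁',l₂',n₁,n₂); consequently a cannot be written in separable form a(l₁,l₂,n₁,n₂) = conj(b(l₁,l₂))·b(n₁,n₂) for any function b : ℤ² → U(1). -/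

import Mathlib

open Complex

noncomputable section

def rCoeff (L N : ℤ × ℤ) : ℂ :=
  ((Real.pi ^ 2 / 2 : ℝ) : ℂ) *
    (((L.1 - N.1 : ℤ) : ℂ) ^ 2 + ((L.2 - N.2 : ℤ) : ℂ) ^ 2 +
      4 * I * ((L.1 * N.2 - L.2 * N.1 : ℤ) : ℂ))

def aCoeff (L N : ℤ × ℤ) : ℂ := -(starRingEnd ℂ (rCoeff L N)) / rCoeff L N

lemma hc : ((Real.pi : ℂ) ^ 2 / 2) ≠ 0 := by
  simp [Real.pi_ne_zero, Complex.ofReal_ne_zero]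

lemma hs : ((2:ℂ) + 4*I) ≠ 0 := by
  intro h
  have := congrArg Complex.im h
  simp at this

lemma e1 : aCoeff (0,0) (2,0) = -1 := by
  simp only [aCoeff, rCoeff, map_mul, Complex.conj_ofReal, map_add, map_pow, map_intCast,
    map_mul, Complex.conj_I, map_ofNat]
  push_cast
  norm_num

lemma e2 : aCoeff (0,0) (0,1) = -1 := by
  simp only [aCoeff, rCoeff, map_mul, Complex.conj_ofReal, map_add, map_pow, map_intCast,
    map_mul, Complex.conj_I, map_ofNat]
  push_cast
  norm_num

lemma e3 : aCoeff (1,0) (2,0) = -1 := by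
  simp only [aCoeff, rCoeff, map_mul, Complex.conj_ofReal, map_add, map_pow, map_intCast,
    map_mul, Complex.conj_I, map_ofNat]
  push_cast
  norm_num

lemma e4 : aCoeff (1,0) (0,1) = (4*I - 2) / (2 + 4*I) := by
  simp only [aCoeff, rCoeff, map_mul, Complex.conj_ofReal, map_add, map_pow, map_intCast,
    map_mul, Complex.conj_I, map_ofNat]
  push_cast
  norm_num
  rw [div_eq_div_iff (mul_ne_zero hc hs) hs]
  ring

lemma key : ∃ L N L' N' : ℤ × ℤ,
      rCoeff L N ≠ 0 ∧ rCoeff L' N' ≠ 0 ∧ rCoeff L N' ≠ 0 ∧ rCoeff L' N ≠ 0 ∧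
      aCoeff L N * aCoeff L' N' ≠ aCoeff L N' * aCoeff L' N := by
  refine ⟨(0,0), (2,0), (1,0), (0,1), ?_, ?_, ?_, ?_, ?_⟩
  case _ | _ | _ | _ =>
    simp only [rCoeff]; push_cast
    refine mul_ne_zero hc ?_
    norm_num [Complex.ext_iff]
  rw [e1, e2, e3, e4]
  intro h
  have h2 : ((4:ℂ)*I - 2) / (2 + 4*I) = -1 := by linear_combination -h
  rw [div_eq_iff hs] at h2
  have := congrArg Complex.im h2
  norm_num at this

theorem aCoeff_not_separable :
    (∃ L N L' N' : ℤ × ℤ,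
      rCoeff L N ≠ 0 ∧ rCoeff L' N' ≠ 0 ∧ rCoeff L N' ≠ 0 ∧ rCoeff L' N ≠ 0 ∧
      aCoeff L N * aCoeff L' N' ≠ aCoeff L N' * aCoeff L' N) ∧
    ∀ b : ℤ × ℤ → ℂ, (∀ L, ‖b L‖ = 1) →
      ¬ (∀ L N : ℤ × ℤ, rCoeff L N ≠ 0 → aCoeff L N = starRingEnd ℂ (b L) * b N) := by
  refine ⟨key, ?_⟩
  intro b hb hsep
  obtain ⟨L, N, L', N', h1, h2, h3, h4, hne⟩ := key
  exact hne (by rw [hsep L N h1, hsep L' N' h2, hsep L N' h3, hsep L' N h4]; ring)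

end
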